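/- Let ℓ > 2 be a prime and let G be a subgroup of GL₂(𝔽_ℓ) such that every element of G fixes at least one line of 𝔽_ℓ² but G fixes no line globally. Then the order of the image H of G in PGL₂(𝔽_ℓ) is not divisible by ℓ. -/

import Mathlib

open Matrix MulAction

variable (ℓ : ℕ) [Fact (Nat.Prime ℓ)]

/-- The group `GL₂(𝔽_ℓ)`. -/
abbrev GL2 := GL (Fin 2) (ZMod ℓ)

/-- The group `PGL₂(𝔽_ℓ)`, the quotient of `GL₂(𝔽_ℓ)` by its center (the scalar matrices). -/
abbrev PGL2 := GL2 ℓ ⧸ Subgroup.center (GL2 ℓ)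

/-- `Ω`, the set of one-dimensional linear subspaces (lines) of `𝔽_ℓ²`. -/
def Line := {W : Submodule (ZMod ℓ) (Fin 2 → ZMod ℓ) // Module.finrank (ZMod ℓ) W = 1}

variable {ℓ}

/-- The natural action of `GL₂(𝔽_ℓ)` on the set of lines of `𝔽_ℓ²`. -/
instance : MulAction (GL2 ℓ) (Line ℓ) where
  smul g W := ⟨W.1.map (Matrix.mulVecLin (g : Matrix (Fin 2) (Fin 2) (ZMod ℓ))), by
    have h1 : ∀ (A : GL2 ℓ) (p : Submodule (ZMod ℓ) (Fin 2 → ZMod ℓ)),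
        Module.finrank (ZMod ℓ) (p.map (Matrix.mulVecLin (A : Matrix (Fin 2) (Fin 2) (ZMod ℓ))))
          ≤ Module.finrank (ZMod ℓ) p :=
      fun A p => Submodule.finrank_map_le _ _
    have h2 := h1 g⁻¹ (W.1.map (Matrix.mulVecLin (g : Matrix (Fin 2) (Fin 2) (ZMod ℓ))))
    rw [← Submodule.map_comp, ← Matrix.mulVecLin_mul] at h2
    have h0 : ((g⁻¹ : GL2 ℓ) : Matrix (Fin 2) (Fin 2) (ZMod ℓ))
        * (g : Matrix (Fin 2) (Fin 2) (ZMod ℓ)) = 1 := by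
      rw [← Units.val_mul, inv_mul_cancel, Units.val_one]
    rw [h0, Matrix.mulVecLin_one, Submodule.map_id] at h2
    have h3 := h1 g W.1
    have h4 := W.2
    omega⟩
  one_smul W := by
    apply Subtype.ext
    show Submodule.map _ _ = _
    simp
  mul_smul g h W := by
    apply Subtype.ext
    show Submodule.map _ _ = Submodule.map _ (Submodule.map _ _)
    rw [← Submodule.map_comp, Units.val_mul, Matrix.mulVecLin_mul]

instance : Finite (Line ℓ) := by
  have : Finite (Submodule (ZMod ℓ) (Fin 2 → ZMod ℓ)) :=
    Finite.of_injective (fun W => (W : Set (Fin 2 → ZMod ℓ))) SetLike.coe_injective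
  exact Subtype.finite

/-- The sign of `g ∈ GL₂(𝔽_ℓ)` as a permutation of the set of lines of `𝔽_ℓ²`.  Since the
scalar matrices act trivially on lines, this is also the sign `σ(h)` of the image `h` of `g`
in `PGL₂(𝔽_ℓ)` acting on the lines. -/
noncomputable def lineSign (g : GL2 ℓ) : ℤˣ :=
  letI : Fintype (Line ℓ) := Fintype.ofFinite _
  letI : DecidableEq (Line ℓ) := Classical.decEq _
  Equiv.Perm.sign (MulAction.toPerm g : Equiv.Perm (Line ℓ))

/-- The image of a subgroup of `GL₂(𝔽_ℓ)` in `PGL₂(𝔽_ℓ)`. -/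
def pglImage (G : Subgroup (GL2 ℓ)) : Subgroup (PGL2 ℓ) :=
  G.map (QuotientGroup.mk' (Subgroup.center (GL2 ℓ)))

section Aux

/-- There is `T` with `T*(T+4)` a nonsquare. -/
lemma aux_exists_nonsquare (ℓ : ℕ) [Fact (Nat.Prime ℓ)] (hl : 2 < ℓ) :
    ∃ T : ZMod ℓ, ¬ IsSquare (T * (T + 4)) := by
  haveI : NeZero ℓ := ⟨(Fact.out : Nat.Prime ℓ).ne_zero⟩
  by_contra hcon
  push_neg at hcon
  have h2 : (2 : ZMod ℓ) ≠ 0 := by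
    have : ((2 : ℕ) : ZMod ℓ) ≠ 0 := by
      rw [Ne, ZMod.natCast_eq_zero_iff]
      intro hd
      have := Nat.le_of_dvd (by norm_num) hd
      omega
    simpa using this
  have h4 : (4 : ZMod ℓ) ≠ 0 := by
    have : ((4 : ℕ) : ZMod ℓ) ≠ 0 := by
      rw [Ne, ZMod.natCast_eq_zero_iff]
      intro hd
      have hp : Nat.Prime ℓ := Fact.out
      have h2' : ℓ ∣ 2 := Nat.Prime.dvd_of_dvd_pow hp (by norm_num [hd] : ℓ ∣ 2 ^ 2)
      have := Nat.le_of_dvd (by norm_num) h2'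
      omega
    simpa using this
  have hsurj : Function.Surjective
      (fun d : (ZMod ℓ)ˣ => ((d : ZMod ℓ) + 4 * (d : ZMod ℓ)⁻¹) * 2⁻¹) := by
    intro s
    obtain ⟨w, hw⟩ := hcon (s - 2)
    have hsq : s ^ 2 - 4 = w * w := by linear_combination hw
    have hd : s - w ≠ 0 := by
      intro h0
      have hsw : s = w := by linear_combination h0
      rw [hsw] at hsq
      apply h4
      linear_combination -hsq
    refine ⟨Units.mk0 (s - w) hd, ?_⟩
    have hinv : (s - w)⁻¹ * 4 = s + w := by
      field_simp
      linear_combination -hsq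
    simp only [Units.val_inv_eq_inv_val, Units.val_mk0]
    field_simp
    linear_combination -hsq
  have hle := Fintype.card_le_of_surjective _ hsurj
  rw [ZMod.card, ZMod.card_units_eq_totient,
    Nat.totient_prime (Fact.out : Nat.Prime ℓ)] at hle
  omega

/-- extract spanning vector from a line -/
lemma aux_line_span (W : Line ℓ) :
    ∃ w, w ≠ 0 ∧ W.1 = Submodule.span (ZMod ℓ) {w} := by
  have h1 := W.2
  have hbot : W.1 ≠ ⊥ := by
    intro h
    rw [h] at h1
    simp at h1
  obtain ⟨w, hwW, hw0⟩ := Submodule.exists_mem_ne_zero_of_ne_bot hbot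
  refine ⟨w, hw0, ?_⟩
  refine (Submodule.eq_of_le_of_finrank_le ?_ ?_).symm
  · rwa [Submodule.span_singleton_le_iff_mem]
  · rw [finrank_span_singleton hw0, h1]

lemma aux_smul_coe (g : GL2 ℓ) (W : Line ℓ) :
    (g • W).1 = W.1.map (Matrix.mulVecLin (g : Matrix (Fin 2) (Fin 2) (ZMod ℓ))) := rfl

/-- a fixed spanning vector gives an eigenvector -/
lemma aux_eigen (g : GL2 ℓ) (W : Line ℓ) (w : Fin 2 → ZMod ℓ)
    (hW : W.1 = Submodule.span (ZMod ℓ) {w}) (hfix : g • W = W) :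
    ∃ c : ZMod ℓ, Matrix.mulVecLin (g : Matrix (Fin 2) (Fin 2) (ZMod ℓ)) w = c • w := by
  have h1 : (g • W).1 = W.1 := by rw [hfix]
  rw [aux_smul_coe, hW] at h1
  have hw : w ∈ Submodule.span (ZMod ℓ) {w} := Submodule.mem_span_singleton_self w
  have : Matrix.mulVecLin (g : Matrix (Fin 2) (Fin 2) (ZMod ℓ)) w
      ∈ Submodule.span (ZMod ℓ) {w} := by
    rw [← h1]
    exact Submodule.mem_map_of_mem hw
  obtain ⟨c, hc⟩ := Submodule.mem_span_singleton.mp this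
  exact ⟨c, hc.symm⟩

lemma aux_pow_apply (g : GL2 ℓ) (k : ℕ) (z : Fin 2 → ZMod ℓ) :
    Matrix.mulVecLin ((g ^ (k+1) : GL2 ℓ) : Matrix (Fin 2) (Fin 2) (ZMod ℓ)) z
      = Matrix.mulVecLin ((g ^ k : GL2 ℓ) : Matrix (Fin 2) (Fin 2) (ZMod ℓ))
        (Matrix.mulVecLin (g : Matrix (Fin 2) (Fin 2) (ZMod ℓ)) z) := by
  rw [pow_succ, Units.val_mul, Matrix.mulVecLin_mul]
  rfl

/-- an eigenvalue of an element of order dividing ℓ is 1 -/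
lemma aux_eigen_one (g : GL2 ℓ) (hg : g ^ ℓ = 1) (w : Fin 2 → ZMod ℓ) (hw : w ≠ 0)
    (c : ZMod ℓ) (hc : Matrix.mulVecLin (g : Matrix (Fin 2) (Fin 2) (ZMod ℓ)) w = c • w) :
    Matrix.mulVecLin (g : Matrix (Fin 2) (Fin 2) (ZMod ℓ)) w = w := by
  have hpow : ∀ k : ℕ,
      Matrix.mulVecLin ((g ^ k : GL2 ℓ) : Matrix (Fin 2) (Fin 2) (ZMod ℓ)) w = c ^ k • w := by
    intro k
    induction k with
    | zero => simp [Matrix.mulVecLin_one]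
    | succ n ih =>
      rw [aux_pow_apply, hc, LinearMap.map_smul, ih, smul_smul, ← pow_succ']
  have hl := hpow ℓ
  rw [hg] at hl
  simp only [Units.val_one, Matrix.mulVecLin_one, LinearMap.id_apply] at hl
  have hcl : c ^ ℓ = 1 := by
    by_contra hne
    have : (c ^ ℓ - 1) • w = 0 := by
      rw [sub_smul, one_smul, ← hl, sub_self]
    rcases smul_eq_zero.mp this with h | h
    · exact hne (by linear_combination h)
    · exact hw h
  have : c = 1 := by rw [← ZMod.pow_card c, hcl]
  rw [hc, this, one_smul]

end Aux

/-- If `ℓ > 2` is prime and `G ⊆ GL₂(𝔽_ℓ)` is a subgroup such that every element of `G` fixes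
a line of `𝔽_ℓ²` but `G` fixes no line globally, then `ℓ` does not divide the order of the
image `H` of `G` in `PGL₂(𝔽_ℓ)`. -/
theorem stmt8 (ℓ : ℕ) [Fact (Nat.Prime ℓ)] (hl : 2 < ℓ) (G : Subgroup (GL2 ℓ))
    (hloc : ∀ g ∈ G, ∃ W : Line ℓ, g • W = W)
    (hglob : ¬ ∃ W : Line ℓ, ∀ g ∈ G, g • W = W) :
    ¬ ℓ ∣ Nat.card (pglImage G) := by
  intro hdvd
  haveI : NeZero ℓ := ⟨(Fact.out : Nat.Prime ℓ).ne_zero⟩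
  have hp : Nat.Prime ℓ := Fact.out
  haveI : Finite (PGL2 ℓ) := Quotient.finite _
  letI : Fintype (pglImage G) := Fintype.ofFinite _
  rw [Nat.card_eq_fintype_card] at hdvd
  obtain ⟨xq, hxq⟩ := exists_prime_orderOf_dvd_card ℓ hdvd
  obtain ⟨g, hgG, hgq⟩ := Subgroup.mem_map.mp xq.2
  have hgord : orderOf ((QuotientGroup.mk' (Subgroup.center (GL2 ℓ))) g) = ℓ := by
    rw [hgq, Subgroup.orderOf_coe, hxq]
  have hdvd2 : ℓ ∣ orderOf g := by
    have h1 := orderOf_map_dvd (QuotientGroup.mk' (Subgroup.center (GL2 ℓ))) g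
    rwa [hgord] at h1
  have hg0 : orderOf g ≠ 0 := (orderOf_pos g).ne'
  set u : GL2 ℓ := g ^ (orderOf g / ℓ) with hu_def
  have huord : orderOf u = ℓ := by
    rw [hu_def, orderOf_pow, Nat.gcd_eq_right (Nat.div_dvd_of_dvd hdvd2),
      Nat.div_div_self hdvd2 hg0]
  have huG : u ∈ G := G.pow_mem hgG _
  have hupow : u ^ ℓ = 1 := by
    have h1 := pow_orderOf_eq_one u
    rwa [huord] at h1
  have hune : u ≠ 1 := by
    intro h
    rw [h, orderOf_one] at huord
    omega
  -- fixed line of u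
  obtain ⟨W, hWfix⟩ := hloc u huG
  obtain ⟨w, hw0, hWspan⟩ := aux_line_span W
  obtain ⟨c, hc⟩ := aux_eigen u W w hWspan hWfix
  have huw : Matrix.mulVecLin (↑u) w = w := aux_eigen_one u hupow w hw0 c hc
  -- an element moving W
  push_neg at hglob
  obtain ⟨h, hhG, hWne⟩ := hglob W
  set v : GL2 ℓ := h * u * h⁻¹ with hv_def
  have hvG : v ∈ G := G.mul_mem (G.mul_mem hhG huG) (G.inv_mem hhG)
  have hvpow : v ^ ℓ = 1 := by
    rw [hv_def, conj_pow, hupow, mul_one, mul_inv_cancel]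
  have hvne : v ≠ 1 := by
    intro hveq
    apply hune
    have h1 : u = h⁻¹ * v * h := by rw [hv_def]; group
    rw [h1, hveq, mul_one, inv_mul_cancel]
  have hvfix : v • (h • W) = h • W := by
    rw [hv_def, smul_smul, inv_mul_cancel_right, mul_smul, hWfix]
  obtain ⟨w', hw'0, hW'span⟩ := aux_line_span (h • W)
  obtain ⟨c', hc'⟩ := aux_eigen v (h • W) w' hW'span hvfix
  have hvw' : Matrix.mulVecLin (↑v) w' = w' := aux_eigen_one v hvpow w' hw'0 c' hc'
  -- linear independence of w, w'
  have hWW' : (h • W).1 ≠ W.1 := fun hh => hWne (Subtype.ext hh)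
  have li : LinearIndependent (ZMod ℓ) ![w, w'] := by
    rw [LinearIndependent.pair_iff]
    intro s t hst
    by_cases ht : t = 0
    · subst ht
      rw [zero_smul, add_zero] at hst
      rcases smul_eq_zero.mp hst with h1 | h1
      · exact ⟨h1, rfl⟩
      · exact absurd h1 hw0
    · exfalso
      have hw'mem : w' ∈ Submodule.span (ZMod ℓ) {w} := by
        rw [Submodule.mem_span_singleton]
        refine ⟨-(t⁻¹ * s), smul_right_injective _ ht ?_⟩
        show t • (-(t⁻¹ * s) • w) = t • w'
        rw [smul_smul]
        have h1 : t * -(t⁻¹ * s) = -s := by field_simp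
        rw [h1, neg_smul]
        exact neg_eq_of_add_eq_zero_right hst
      have hle : (h • W).1 ≤ W.1 := by
        rw [hW'span, hWspan, Submodule.span_singleton_le_iff_mem]
        exact hw'mem
      have heq : (h • W).1 = W.1 :=
        Submodule.eq_of_le_of_finrank_le hle (by rw [W.2, (h • W).2])
      exact hWW' heq
  have hrange : Set.range ![w, w'] = {w, w'} := by
    ext z
    simp [Fin.exists_fin_two, or_comm]
  have hspan : Submodule.span (ZMod ℓ) {w, w'} = ⊤ := by
    apply Submodule.eq_top_of_finrank_eq
    rw [← hrange, finrank_span_eq_card li]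
    simp
  have hdecomp : ∀ z : Fin 2 → ZMod ℓ, ∃ s t : ZMod ℓ, s • w + t • w' = z := by
    intro z
    exact Submodule.mem_span_pair.mp (hspan ▸ Submodule.mem_top)
  have uniq : ∀ s t s' t' : ZMod ℓ,
      s • w + t • w' = s' • w + t' • w' → s = s' ∧ t = t' := by
    intro s t s' t' hst
    have h0 : (s - s') • w + (t - t') • w' = 0 := by
      have h1 : (s • w + t • w') - (s' • w + t' • w') = 0 := sub_eq_zero.mpr hst
      calc (s - s') • w + (t - t') • w'
          = (s • w + t • w') - (s' • w + t' • w') := by module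
        _ = 0 := h1
    obtain ⟨h1, h2⟩ := (LinearIndependent.pair_iff.mp li) _ _ h0
    exact ⟨sub_eq_zero.mp h1, sub_eq_zero.mp h2⟩
  -- powers of u fix w
  have huwk : ∀ k : ℕ, Matrix.mulVecLin (↑(u ^ k)) w = w := by
    intro k
    induction k with
    | zero => simp
    | succ n ih => rw [aux_pow_apply, huw, ih]
  -- decompose u w'
  obtain ⟨a, d, had⟩ := hdecomp (Matrix.mulVecLin (↑u) w')
  have hpowd : ∀ k : ℕ, ∃ C : ZMod ℓ,
      Matrix.mulVecLin (↑(u ^ k)) w' = C • w + d ^ k • w' := by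
    intro k
    induction k with
    | zero => exact ⟨0, by simp⟩
    | succ n ih =>
      obtain ⟨C, hC⟩ := ih
      refine ⟨a + d * C, ?_⟩
      rw [aux_pow_apply, ← had, map_add, LinearMap.map_smul, LinearMap.map_smul, huwk n, hC]
      module
  have hd1 : d = 1 := by
    obtain ⟨C, hC⟩ := hpowd ℓ
    rw [hupow] at hC
    simp only [Units.val_one, Matrix.mulVecLin_one, LinearMap.id_apply] at hC
    have h1 : (0 : ZMod ℓ) • w + (1 : ZMod ℓ) • w' = C • w + d ^ ℓ • w' := by
      rw [zero_smul, one_smul, zero_add]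
      exact hC
    obtain ⟨-, h2⟩ := uniq _ _ _ _ h1
    rw [← ZMod.pow_card d, ← h2]
  have huw' : Matrix.mulVecLin (↑u) w' = a • w + w' := by
    rw [← had, hd1, one_smul]
  -- identity criterion
  have hid_one : ∀ q : GL2 ℓ,
      (∀ z, Matrix.mulVecLin (↑q : Matrix (Fin 2) (Fin 2) (ZMod ℓ)) z = z) → q = 1 := by
    intro q hq
    have hmat : (↑q : Matrix (Fin 2) (Fin 2) (ZMod ℓ))
        = (↑(1 : GL2 ℓ) : Matrix (Fin 2) (Fin 2) (ZMod ℓ)) := by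
      rw [Units.val_one]
      ext i j
      have h1 := hq (Pi.single j 1)
      rw [Matrix.mulVecLin_apply, Matrix.mulVec_single] at h1
      have h2 := congrFun h1 i
      rw [Pi.single_apply] at h2
      rw [Matrix.one_apply]
      simpa using h2
    exact Units.ext hmat
  have ha0 : a ≠ 0 := by
    intro h0
    apply hune
    apply hid_one
    intro z
    obtain ⟨s, t, hz⟩ := hdecomp z
    rw [← hz, map_add, LinearMap.map_smul, LinearMap.map_smul, huw, huw', h0, zero_smul, zero_add]
  -- powers of v fix w'
  have hvwk : ∀ k : ℕ, Matrix.mulVecLin (↑(v ^ k)) w' = w' := by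
    intro k
    induction k with
    | zero => simp
    | succ n ih => rw [aux_pow_apply, hvw', ih]
  -- decompose v w
  obtain ⟨x, y, hxy⟩ := hdecomp (Matrix.mulVecLin (↑v) w)
  have hpowx : ∀ k : ℕ, ∃ C : ZMod ℓ,
      Matrix.mulVecLin (↑(v ^ k)) w = x ^ k • w + C • w' := by
    intro k
    induction k with
    | zero => exact ⟨0, by simp⟩
    | succ n ih =>
      obtain ⟨C, hC⟩ := ih
      refine ⟨x * C + y, ?_⟩
      rw [aux_pow_apply, ← hxy, map_add, LinearMap.map_smul, LinearMap.map_smul, hvwk n, hC]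
      module
  have hx1 : x = 1 := by
    obtain ⟨C, hC⟩ := hpowx ℓ
    rw [hvpow] at hC
    simp only [Units.val_one, Matrix.mulVecLin_one, LinearMap.id_apply] at hC
    have h1 : (1 : ZMod ℓ) • w + (0 : ZMod ℓ) • w' = x ^ ℓ • w + C • w' := by
      rw [zero_smul, one_smul, add_zero]
      exact hC
    obtain ⟨h2, -⟩ := uniq _ _ _ _ h1
    rw [← ZMod.pow_card x, ← h2]
  have hvw : Matrix.mulVecLin (↑v) w = w + y • w' := by
    rw [← hxy, hx1, one_smul]
  have hy0 : y ≠ 0 := by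
    intro h0
    apply hvne
    apply hid_one
    intro z
    obtain ⟨s, t, hz⟩ := hdecomp z
    rw [← hz, map_add, LinearMap.map_smul, LinearMap.map_smul, hvw, hvw', h0, zero_smul, add_zero]
  -- powers of u on w'
  have hukw' : ∀ k : ℕ, Matrix.mulVecLin (↑(u ^ k)) w' = ((k : ZMod ℓ) * a) • w + w' := by
    intro k
    induction k with
    | zero => simp
    | succ n ih =>
      rw [aux_pow_apply, huw', map_add, LinearMap.map_smul, huwk n, ih]
      push_cast
      module
  -- choose the nonsquare value
  obtain ⟨T, hT⟩ := aux_exists_nonsquare ℓ hl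
  have hay : a * y ≠ 0 := mul_ne_zero ha0 hy0
  set i : ℕ := (T * (a * y)⁻¹).val with hi_def
  have hi : (i : ZMod ℓ) = T * (a * y)⁻¹ := ZMod.natCast_rightInverse _
  have hAy : (i : ZMod ℓ) * a * y = T := by
    rw [hi]
    field_simp
  -- the element with no fixed line
  set g1 : GL2 ℓ := u ^ i * v with hg1_def
  have hg1G : g1 ∈ G := G.mul_mem (G.pow_mem huG _) hvG
  have hg1w : Matrix.mulVecLin (↑g1) w = (1 + T) • w + y • w' := by
    rw [hg1_def, Units.val_mul, Matrix.mulVecLin_mul, LinearMap.comp_apply, hvw,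
      map_add, LinearMap.map_smul, huwk i, hukw' i, ← hAy]
    module
  have hg1w' : Matrix.mulVecLin (↑g1) w' = ((i : ZMod ℓ) * a) • w + w' := by
    rw [hg1_def, Units.val_mul, Matrix.mulVecLin_mul, LinearMap.comp_apply, hvw', hukw' i]
  obtain ⟨W'', hW''⟩ := hloc g1 hg1G
  obtain ⟨z, hz0, hzspan⟩ := aux_line_span W''
  obtain ⟨cc, hcc⟩ := aux_eigen g1 W'' z hzspan hW''
  obtain ⟨s, t, hz⟩ := hdecomp z
  have h1 : Matrix.mulVecLin (↑g1) z = cc • z := hcc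
  rw [← hz, map_add, LinearMap.map_smul, LinearMap.map_smul, hg1w, hg1w'] at h1
  have lhs_eq : s • ((1 + T) • w + y • w') + t • (((i : ZMod ℓ) * a) • w + w')
      = (s * (1 + T) + t * ((i : ZMod ℓ) * a)) • w + (s * y + t) • w' := by module
  have rhs_eq : cc • (s • w + t • w') = (cc * s) • w + (cc * t) • w' := by module
  rw [lhs_eq, rhs_eq] at h1
  obtain ⟨eq1, eq2⟩ := uniq _ _ _ _ h1
  have hTne : T ≠ 0 := by
    intro h0
    exact hT ⟨0, by rw [h0]; ring⟩
  have hA0 : (i : ZMod ℓ) * a ≠ 0 := by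
    intro h0
    apply hTne
    rw [← hAy, h0, zero_mul]
  have hs0 : s ≠ 0 := by
    intro h0
    have ht0 : t ≠ 0 := by
      intro h0'
      apply hz0
      rw [← hz, h0, h0', zero_smul, zero_smul, zero_add]
    have h2 : t * ((i : ZMod ℓ) * a) = 0 := by
      have := eq1
      rw [h0] at this
      linear_combination this
    rcases mul_eq_zero.mp h2 with h3 | h3
    · exact ht0 h3
    · exact hA0 h3
  have key : cc ^ 2 - (2 + T) * cc + 1 = 0 := by
    have h0 : s * y * (cc ^ 2 - (2 + T) * cc + 1) = 0 := by
      have hAy' : ((i : ZMod ℓ) * a) * y = T := hAy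
      linear_combination (y * (1 - cc)) * eq1 - (((i : ZMod ℓ) * a) * y) * eq2 + (s * y) * hAy'
    rcases mul_eq_zero.mp h0 with h3 | h3
    · rcases mul_eq_zero.mp h3 with h4 | h4
      · exact absurd h4 hs0
      · exact absurd h4 hy0
    · exact h3
  exact hT ⟨(2 + T) - 2 * cc, by linear_combination (-4) * key⟩
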